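/- Let S be a finite set of links, each link l with signal power s_l > 0, noise constant c_l > 0, and pairwise relative interferences r_{l'}(l) ≥ 0 with r_l(l) = 0. Define the affectness a_T(l) = c_l·Σ_{l'∈T} r_{l'}(l) for any subset T ⊆ S. Call T a p-signal set if a_T(l) ≤ 1/p for all l ∈ T. Then any p-signal set S can be partitioned into at most ⌈4·(p'/p)²⌉ subsets, each of which is a p'-signal set, for any p' > p. -/

import Mathlib

open Finset
open scoped Classical

noncomputable section SigAux

variable {N m : ℕ}

/-- first-fit pick for position `k`, given assignment `g` of previous positions. -/
noncomputable def ffPick (hm : 0 < m) (q : Fin N → Fin N → ℝ) (σ : Fin N → Fin m → ℝ)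
    (k : Fin N) (g : ℕ → Fin m) : Fin m :=
  let s := (univ : Finset (Fin m)).filter (fun i =>
      ∑ j ∈ univ.filter (fun j : Fin N => j < k ∧ g j.val = i), q j k ≤ σ k i)
  if hP : s.Nonempty then s.min' hP else ⟨0, hm⟩

noncomputable def ffAux (hm : 0 < m) (q : Fin N → Fin N → ℝ) (σ : Fin N → Fin m → ℝ) :
    ℕ → ℕ → Fin m
  | 0, _ => ⟨0, hm⟩
  | (t+1), x =>
    if x = t then
      (if ht : t < N then ffPick hm q σ ⟨t, ht⟩ (ffAux hm q σ t) else ⟨0, hm⟩)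
    else ffAux hm q σ t x

noncomputable def ff (hm : 0 < m) (q : Fin N → Fin N → ℝ) (σ : Fin N → Fin m → ℝ) :
    ℕ → Fin m := fun t => ffAux hm q σ (t+1) t

lemma ffAux_eq (hm : 0 < m) (q : Fin N → Fin N → ℝ) (σ : Fin N → Fin m → ℝ) :
    ∀ t x, x < t → ffAux hm q σ t x = ff hm q σ x := by
  intro t
  induction t with
  | zero => omega
  | succ t ih =>
    intro x hx
    rcases eq_or_lt_of_le (Nat.lt_succ_iff.mp hx) with h | h
    · subst h; rfl
    · show ffAux hm q σ (t+1) x = _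
      rw [ffAux, if_neg (by omega), ih x h]

lemma ff_spec (hm : 0 < m) (q : Fin N → Fin N → ℝ) (σ : Fin N → Fin m → ℝ) (k : Fin N) :
    (∀ i : Fin m, i < ff hm q σ k.val →
      σ k i < ∑ j ∈ univ.filter (fun j : Fin N => j < k ∧ ff hm q σ j.val = i), q j k) ∧
    ((∑ j ∈ univ.filter (fun j : Fin N => j < k ∧ ff hm q σ j.val = ff hm q σ k.val), q j k
        ≤ σ k (ff hm q σ k.val)) ∨
      ∀ i : Fin m, σ k i < ∑ j ∈ univ.filter
        (fun j : Fin N => j < k ∧ ff hm q σ j.val = i), q j k) := by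
  have hpred : ∀ i : Fin m,
      (univ.filter (fun j : Fin N => j < k ∧ ffAux hm q σ k.val j.val = i))
        = univ.filter (fun j : Fin N => j < k ∧ ff hm q σ j.val = i) := by
    intro i
    apply filter_congr
    intro j _
    constructor
    · rintro ⟨h1, h2⟩; exact ⟨h1, by rw [← ffAux_eq hm q σ k.val j.val h1]; exact h2⟩
    · rintro ⟨h1, h2⟩; exact ⟨h1, by rw [ffAux_eq hm q σ k.val j.val h1]; exact h2⟩
  have hk : ff hm q σ k.val = ffPick hm q σ k (ffAux hm q σ k.val) := by
    show ffAux hm q σ (k.val+1) k.val = _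
    rw [ffAux, if_pos rfl, dif_pos k.isLt, Fin.eta]
  rw [ffPick] at hk
  set s := (univ : Finset (Fin m)).filter (fun i =>
      ∑ j ∈ univ.filter (fun j : Fin N => j < k ∧ ffAux hm q σ k.val j.val = i), q j k
        ≤ σ k i) with hs
  by_cases hP : s.Nonempty
  · rw [dif_pos hP] at hk
    have hmem := s.min'_mem hP
    rw [← hk] at hmem
    rw [hs, mem_filter, hpred] at hmem
    constructor
    · intro i hi
      by_contra hcon
      push_neg at hcon
      have : i ∈ s := by rw [hs, mem_filter, hpred]; exact ⟨mem_univ _, hcon⟩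
      have := s.min'_le i this
      rw [← hk] at this
      exact absurd hi (not_lt.mpr this)
    · exact Or.inl hmem.2
  · rw [dif_neg hP] at hk
    have hall : ∀ i : Fin m, σ k i <
        ∑ j ∈ univ.filter (fun j : Fin N => j < k ∧ ff hm q σ j.val = i), q j k := by
      intro i
      by_contra hcon
      push_neg at hcon
      exact hP ⟨i, by rw [hs, mem_filter, hpred]; exact ⟨mem_univ _, hcon⟩⟩
    exact ⟨fun i _ => hall i, Or.inr hall⟩

end SigAux


lemma sig_core (N : ℕ) (q : Fin N → Fin N → ℝ) (hq : ∀ j k, 0 ≤ q j k)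
    (hqkk : ∀ k, q k k = 0) (B B' : ℝ) (hQ : ∀ k, ∑ j, q j k ≤ B)
    (m : ℕ) (hm : 0 < m) (K : Fin m → ℕ) (hK : ∀ i, 0 < K i)
    (σ₁ σ₂ : Fin m → ℝ)
    (hC1 : B ≤ ∑ i, σ₁ i)
    (hC2 : ∀ i : Fin m, B - ∑ i' ∈ univ.filter (fun i' => i' < i), σ₁ i' ≤ (K i : ℝ) * σ₂ i)
    (hC3 : ∀ i, σ₁ i + σ₂ i ≤ B') :
    ∃ F : Fin N → (Σ i : Fin m, Fin (K i)),
      ∀ c, ∀ k : Fin N, F k = c →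
        ∑ j ∈ univ.filter (fun j => F j = c), q j k ≤ B' := by
  classical
  -- Phase 1
  set F1 : Fin N → Fin m := fun k => ff hm q (fun _ i => σ₁ i) k.val with hF1
  have spec1 : ∀ k : Fin N,
      (∀ i : Fin m, i < F1 k →
        σ₁ i < ∑ j ∈ univ.filter (fun j : Fin N => j < k ∧ F1 j = i), q j k) ∧
      ((∑ j ∈ univ.filter (fun j : Fin N => j < k ∧ F1 j = F1 k), q j k ≤ σ₁ (F1 k)) ∨
        ∀ i : Fin m, σ₁ i < ∑ j ∈ univ.filter (fun j : Fin N => j < k ∧ F1 j = i), q j k) := by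
    intro k; exact ff_spec hm q (fun _ i => σ₁ i) k
  -- fiberwise sums
  have fiber : ∀ (k : Fin N) (P : Fin N → Prop) (c : Fin m) (G : Fin N → Fin m),
      ∑ i' ∈ univ.filter (fun i' : Fin m => i' < c),
        ∑ j ∈ univ.filter (fun j : Fin N => P j ∧ G j = i'), q j k
      ≤ ∑ j ∈ univ.filter (fun j : Fin N => P j), q j k := by
    intro k P c G
    have h1 : ∀ i' : Fin m,
        univ.filter (fun j : Fin N => P j ∧ G j = i')
          = (univ.filter (fun j : Fin N => P j)).filter (fun j => G j = i') := by
      intro i'; rw [filter_filter]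
    calc ∑ i' ∈ univ.filter (fun i' : Fin m => i' < c),
          ∑ j ∈ univ.filter (fun j : Fin N => P j ∧ G j = i'), q j k
        ≤ ∑ i' : Fin m, ∑ j ∈ univ.filter (fun j : Fin N => P j ∧ G j = i'), q j k := by
          apply sum_le_sum_of_subset_of_nonneg (filter_subset _ _)
          intro i' _ _
          exact sum_nonneg fun j _ => hq j k
      _ = ∑ j ∈ univ.filter (fun j : Fin N => P j), q j k := by
          simp_rw [h1]
          exact sum_fiberwise _ _ _
  -- Phase-1 totality: accept branch always holds
  have acc1 : ∀ k : Fin N,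
      ∑ j ∈ univ.filter (fun j : Fin N => j < k ∧ F1 j = F1 k), q j k ≤ σ₁ (F1 k) := by
    intro k
    rcases (spec1 k).2 with h | h
    · exact h
    · exfalso
      have hlt : ∑ i : Fin m, σ₁ i <
          ∑ i : Fin m, ∑ j ∈ univ.filter (fun j : Fin N => j < k ∧ F1 j = i), q j k := by
        haveI : Nonempty (Fin m) := ⟨⟨0, hm⟩⟩
        apply sum_lt_sum_of_nonempty univ_nonempty
        intro i _; exact h i
      have h2 : ∑ i : Fin m, ∑ j ∈ univ.filter (fun j : Fin N => j < k ∧ F1 j = i), q j k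
          = ∑ j ∈ univ.filter (fun j : Fin N => j < k), q j k := by
        simp_rw [fun i => filter_filter (fun j : Fin N => j < k) (fun j => F1 j = i) univ |>.symm]
        exact sum_fiberwise _ _ _
      have h3 : ∑ j ∈ univ.filter (fun j : Fin N => j < k), q j k ≤ ∑ j, q j k :=
        sum_le_sum_of_subset_of_nonneg (filter_subset _ _) fun j _ _ => hq j k
      have := hQ k
      linarith
  have rej1 : ∀ k : Fin N, ∀ i : Fin m, i < F1 k →
      σ₁ i < ∑ j ∈ univ.filter (fun j : Fin N => j < k ∧ F1 j = i), q j k :=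
    fun k => (spec1 k).1
  -- Phase 2 setup
  haveI : Nonempty (Fin m) := ⟨⟨0, hm⟩⟩
  set M : ℕ := ∑ i, K i with hMdef
  have hKM : ∀ i, K i ≤ M := fun i =>
    single_le_sum (f := fun i => K i) (fun _ _ => Nat.zero_le _) (mem_univ i)
  have hM : 0 < M := lt_of_lt_of_le (hK ⟨0, hm⟩) (hKM ⟨0, hm⟩)
  set q2 : Fin N → Fin N → ℝ := fun j k =>
    if F1 (Fin.rev j) = F1 (Fin.rev k) then q (Fin.rev j) (Fin.rev k) else 0 with hq2def
  have hq2nn : ∀ j k, 0 ≤ q2 j k := by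
    intro j k
    simp only [hq2def]
    split
    · exact hq _ _
    · exact le_refl 0
  set σ2' : Fin N → Fin M → ℝ := fun k i =>
    if (i : ℕ) < K (F1 (Fin.rev k)) then σ₂ (F1 (Fin.rev k)) else (-1) with hσ2def
  set G : Fin N → Fin M := fun k => ff hM q2 σ2' (Fin.rev k).val with hGdef
  -- translation of phase-2 sums
  have translate : ∀ (k : Fin N) (i : Fin M),
      ∑ j ∈ univ.filter (fun j : Fin N => j < Fin.rev k ∧ ff hM q2 σ2' j.val = i),
        q2 j (Fin.rev k)
      = ∑ j ∈ univ.filter (fun j : Fin N => k < j ∧ G j = i ∧ F1 j = F1 k), q j k := by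
    intro k i
    rw [sum_filter, sum_filter]
    rw [← Equiv.sum_comp (Fin.revPerm : Fin N ≃ Fin N)
      (fun j => if k < j ∧ G j = i ∧ F1 j = F1 k then q j k else 0)]
    apply Fintype.sum_congr
    intro j
    simp only [Fin.revPerm_apply]
    have h2 : ff hM q2 σ2' j.val = G (Fin.rev j) := by
      rw [hGdef]
      simp [Fin.rev_rev]
    have h3 : q2 j (Fin.rev k) = if F1 (Fin.rev j) = F1 k then q (Fin.rev j) k else 0 := by
      simp only [hq2def, Fin.rev_rev]
    rw [h2, h3]
    simp only [Fin.lt_rev_iff]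
    split_ifs <;> tauto
  -- Phase-2 totality / acceptance
  have acc2' : ∀ k : Fin N,
      ∑ j ∈ univ.filter (fun j : Fin N => k < j ∧ G j = G k ∧ F1 j = F1 k), q j k
        ≤ σ2' (Fin.rev k) (G k) := by
    intro k
    rcases (ff_spec hM q2 σ2' (Fin.rev k)).2 with h | h
    · rw [translate k (G k)] at h
      exact h
    · exfalso
      set c := F1 k with hc
      haveI : Nonempty (Fin (K c)) := ⟨⟨0, hK c⟩⟩
      set T : Fin M → ℝ := fun i =>
        ∑ j ∈ univ.filter (fun j : Fin N => k < j ∧ G j = i ∧ F1 j = F1 k), q j k with hT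
      have hTnn : ∀ i, 0 ≤ T i := fun i => sum_nonneg fun j _ => hq j k
      have hstrict : (K c : ℝ) * σ₂ c < ∑ i' : Fin (K c), T (Fin.castLE (hKM c) i') := by
        have : ∀ i' : Fin (K c), σ₂ c < T (Fin.castLE (hKM c) i') := by
          intro i'
          have := h (Fin.castLE (hKM c) i')
          rw [translate k (Fin.castLE (hKM c) i')] at this
          have hσval : σ2' (Fin.rev k) (Fin.castLE (hKM c) i') = σ₂ c := by
            simp only [hσ2def, Fin.rev_rev, Fin.coe_castLE]
            rw [if_pos i'.isLt]
          rw [hσval] at this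
          exact this
        calc (K c : ℝ) * σ₂ c = ∑ _i' : Fin (K c), σ₂ c := by
              simp [mul_comm]
          _ < ∑ i' : Fin (K c), T (Fin.castLE (hKM c) i') :=
              sum_lt_sum_of_nonempty univ_nonempty fun i' _ => this i'
      have hembed : ∑ i' : Fin (K c), T (Fin.castLE (hKM c) i') ≤ ∑ i : Fin M, T i := by
        have hmap := sum_map (univ : Finset (Fin (K c))) (Fin.castLEEmb (hKM c)) T
        simp only [Fin.coe_castLEEmb] at hmap
        rw [show (fun i' : Fin (K c) => T (Fin.castLE (hKM c) i'))
            = fun i' => T ((Fin.castLEEmb (hKM c)) i') from rfl]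
        rw [← sum_map univ (Fin.castLEEmb (hKM c)) T]
        exact sum_le_sum_of_subset_of_nonneg (subset_univ _) fun i _ _ => hTnn i
      have hfibT : ∑ i : Fin M, T i
          ≤ ∑ j ∈ univ.filter (fun j : Fin N => k < j), q j k := by
        have hre : ∀ i : Fin M,
            univ.filter (fun j : Fin N => k < j ∧ G j = i ∧ F1 j = F1 k)
              = univ.filter (fun j : Fin N => (k < j ∧ F1 j = F1 k) ∧ G j = i) := by
          intro i
          apply filter_congr
          intro j _
          constructor
          · rintro ⟨a, b, d⟩; exact ⟨⟨a, d⟩, b⟩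
          · rintro ⟨⟨a, d⟩, b⟩; exact ⟨a, b, d⟩
        calc ∑ i : Fin M, T i
            = ∑ j ∈ univ.filter (fun j : Fin N => k < j ∧ F1 j = F1 k), q j k := by
              simp_rw [hT, hre]
              simp_rw [fun i => (filter_filter (fun j : Fin N => k < j ∧ F1 j = F1 k)
                (fun j => G j = i) univ).symm]
              exact sum_fiberwise _ _ _
          _ ≤ ∑ j ∈ univ.filter (fun j : Fin N => k < j), q j k := by
              apply sum_le_sum_of_subset_of_nonneg
              · intro j hj
                rw [mem_filter] at hj ⊢
                exact ⟨hj.1, hj.2.1⟩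
              · intro j _ _; exact hq j k
      have hweak : ∑ i' ∈ univ.filter (fun i' : Fin m => i' < c), σ₁ i'
          ≤ ∑ j ∈ univ.filter (fun j : Fin N => j < k), q j k := by
        calc ∑ i' ∈ univ.filter (fun i' : Fin m => i' < c), σ₁ i'
            ≤ ∑ i' ∈ univ.filter (fun i' : Fin m => i' < c),
                ∑ j ∈ univ.filter (fun j : Fin N => j < k ∧ F1 j = i'), q j k := by
              apply sum_le_sum
              intro i' hi'
              rw [mem_filter] at hi'
              exact le_of_lt (rej1 k i' hi'.2)
          _ ≤ ∑ i' : Fin m,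
                ∑ j ∈ univ.filter (fun j : Fin N => j < k ∧ F1 j = i'), q j k :=
              sum_le_sum_of_subset_of_nonneg (filter_subset _ _)
                (fun i' _ _ => sum_nonneg fun j _ => hq j k)
          _ ≤ _ := by
              simp_rw [fun i' => (filter_filter (fun j : Fin N => j < k)
                (fun j => F1 j = i') univ).symm]
              rw [sum_fiberwise _ _ _]
      have hsplit : ∑ j ∈ univ.filter (fun j : Fin N => j < k), q j k
          + ∑ j ∈ univ.filter (fun j : Fin N => k < j), q j k ≤ ∑ j, q j k := by
        rw [sum_filter, sum_filter, ← sum_add_distrib]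
        apply sum_le_sum
        intro j _
        rcases lt_trichotomy j k with h' | h' | h'
        · simp [h', not_lt_of_gt h', hq j k]
        · simp [h', hqkk]
        · simp [h', not_lt_of_gt h', hq j k]
      have hC2c := hC2 c
      have hQk := hQ k
      linarith
  have hGlt : ∀ k : Fin N, (G k : ℕ) < K (F1 k) := by
    intro k
    by_contra hcon
    have h := acc2' k
    have hσval : σ2' (Fin.rev k) (G k) = -1 := by
      simp only [hσ2def, Fin.rev_rev]
      rw [if_neg hcon]
    rw [hσval] at h
    have : (0:ℝ) ≤ ∑ j ∈ univ.filter
        (fun j : Fin N => k < j ∧ G j = G k ∧ F1 j = F1 k), q j k :=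
      sum_nonneg fun j _ => hq j k
    linarith
  have acc2 : ∀ k : Fin N,
      ∑ j ∈ univ.filter (fun j : Fin N => k < j ∧ G j = G k ∧ F1 j = F1 k), q j k
        ≤ σ₂ (F1 k) := by
    intro k
    have h := acc2' k
    have hσval : σ2' (Fin.rev k) (G k) = σ₂ (F1 k) := by
      simp only [hσ2def, Fin.rev_rev]
      rw [if_pos (hGlt k)]
    rwa [hσval] at h
  -- final assignment
  refine ⟨fun k => ⟨F1 k, ⟨(G k).val, hGlt k⟩⟩, ?_⟩
  intro c k hFk
  subst hFk
  have hFeq : ∀ j : Fin N,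
      ((⟨F1 j, ⟨(G j).val, hGlt j⟩⟩ : Σ i : Fin m, Fin (K i))
        = ⟨F1 k, ⟨(G k).val, hGlt k⟩⟩) ↔ (F1 j = F1 k ∧ G j = G k) := by
    intro j
    constructor
    · intro h
      have h1 : F1 j = F1 k := congrArg Sigma.fst h
      have h2 := (Sigma.mk.inj_iff.mp h).2
      have h3 : (G j).val = (G k).val :=
        (Fin.heq_ext_iff (congrArg K h1)).mp h2
      exact ⟨h1, Fin.ext h3⟩
    · rintro ⟨h1, h2⟩
      exact Sigma.ext h1 ((Fin.heq_ext_iff (congrArg K h1)).mpr (congrArg Fin.val h2))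
  rw [filter_congr (fun j _ => hFeq j)]
  -- split the class sum into before/at/after k
  set P : Fin N → Prop := fun j => F1 j = F1 k ∧ G j = G k with hP
  have split1 := sum_filter_add_sum_filter_not (univ.filter P) (fun j => j < k)
    (fun j => q j k)
  have split2 := sum_filter_add_sum_filter_not ((univ.filter P).filter (fun j => ¬ j < k))
    (fun j => j = k) (fun j => q j k)
  have part1 : ∑ j ∈ (univ.filter P).filter (fun j => j < k), q j k ≤ σ₁ (F1 k) := by
    calc ∑ j ∈ (univ.filter P).filter (fun j => j < k), q j k
        ≤ ∑ j ∈ univ.filter (fun j : Fin N => j < k ∧ F1 j = F1 k), q j k := by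
          apply sum_le_sum_of_subset_of_nonneg
          · intro j hj
            simp only [mem_filter, hP] at hj ⊢
            exact ⟨hj.1.1, hj.2, hj.1.2.1⟩
          · intro j _ _; exact hq j k
      _ ≤ σ₁ (F1 k) := acc1 k
  have part2a : ∑ j ∈ ((univ.filter P).filter (fun j => ¬ j < k)).filter
      (fun j => j = k), q j k = 0 := by
    apply sum_eq_zero
    intro j hj
    rw [mem_filter] at hj
    rw [hj.2, hqkk]
  have part2b : ∑ j ∈ ((univ.filter P).filter (fun j => ¬ j < k)).filter
      (fun j => ¬ j = k), q j k ≤ σ₂ (F1 k) := by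
    calc ∑ j ∈ ((univ.filter P).filter (fun j => ¬ j < k)).filter (fun j => ¬ j = k), q j k
        ≤ ∑ j ∈ univ.filter (fun j : Fin N => k < j ∧ G j = G k ∧ F1 j = F1 k), q j k := by
          apply sum_le_sum_of_subset_of_nonneg
          · intro j hj
            simp only [mem_filter, hP] at hj ⊢
            refine ⟨hj.1.1.1, ?_, hj.1.1.2.2, hj.1.1.2.1⟩
            rcases lt_trichotomy j k with h' | h' | h'
            · exact absurd h' hj.1.2
            · exact absurd h' hj.2
            · exact h'
          · intro j _ _; exact hq j k
      _ ≤ σ₂ (F1 k) := acc2 k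
  have hC3k := hC3 (F1 k)
  linarith


noncomputable def useq (ε : ℝ) (Kn : ℕ → ℕ) : ℕ → ℝ
  | 0 => 1
  | (x+1) => useq ε Kn x * (1 + 1/(Kn x : ℝ)) - ε

lemma finFilterSum {m : ℕ} (i : Fin m) (g : ℕ → ℝ) :
    ∑ i' ∈ (univ : Finset (Fin m)).filter (fun i' => i' < i), g i'.val
      = ∑ x ∈ Finset.range i.val, g x := by
  have h1 : ∑ i' ∈ (univ : Finset (Fin m)).filter (fun i' => i' < i), g i'.val
      = ∑ i' : Fin m, (if i'.val < i.val then g i'.val else 0) := by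
    rw [sum_filter]
    apply Fintype.sum_congr
    intro i'
    congr 1
  rw [h1, Fin.sum_univ_eq_sum_range (fun x => if x < i.val then g x else 0) m]
  rw [← sum_filter]
  congr 1
  ext x
  simp only [mem_filter, mem_range]
  constructor
  · rintro ⟨_, h⟩; exact h
  · intro h; exact ⟨lt_of_lt_of_le h (le_of_lt i.isLt), h⟩

lemma sig_build {p p' : ℝ} (hp : 0 < p) (hpp' : p < p') (m : ℕ) (Kn : ℕ → ℕ)
    (hK : ∀ x, x < m → 0 < Kn x) (hum : useq (p/p') Kn m ≤ 0) :
    ∃ σ₁ σ₂ : Fin m → ℝ,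
      (1/p ≤ ∑ i, σ₁ i) ∧
      (∀ i : Fin m, 1/p - ∑ i' ∈ univ.filter (fun i' => i' < i), σ₁ i'
          ≤ (Kn i.val : ℝ) * σ₂ i) ∧
      (∀ i : Fin m, σ₁ i + σ₂ i ≤ 1/p') := by
  have hp' : 0 < p' := hp.trans hpp'
  set ε := p / p' with hε
  set u := useq ε Kn with hu
  set g : ℕ → ℝ := fun x => 1/p' - u x / ((Kn x : ℝ) * p) with hg
  refine ⟨fun i => g i.val, fun i => u i.val / ((Kn i.val : ℝ) * p), ?_, ?_, ?_⟩
  · -- C1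
    have htel : ∀ x ∈ Finset.range m, g x = u x / p - u (x+1) / p := by
      intro x hx
      rw [mem_range] at hx
      have hKx : (0:ℝ) < (Kn x : ℝ) := by exact_mod_cast hK x hx
      have : u (x+1) = u x * (1 + 1/(Kn x : ℝ)) - ε := by rw [hu]; rfl
      rw [hg]
      simp only
      rw [this, hε]
      field_simp
      ring
    rw [Fin.sum_univ_eq_sum_range (fun x => g x) m, sum_congr rfl htel,
      Finset.sum_range_sub' (fun x => u x / p) m]
    have hu0 : u 0 = 1 := rfl
    rw [hu0]
    have : u m / p ≤ 0 := div_nonpos_of_nonpos_of_nonneg hum (le_of_lt hp)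
    linarith
  · -- C2
    intro i
    have htel : ∀ x ∈ Finset.range i.val, g x = u x / p - u (x+1) / p := by
      intro x hx
      rw [mem_range] at hx
      have hxm : x < m := lt_of_lt_of_le hx (le_of_lt i.isLt)
      have hKx : (0:ℝ) < (Kn x : ℝ) := by exact_mod_cast hK x hxm
      have : u (x+1) = u x * (1 + 1/(Kn x : ℝ)) - ε := by rw [hu]; rfl
      rw [hg]
      simp only
      rw [this, hε]
      field_simp
      ring
    rw [finFilterSum i g, sum_congr rfl htel, Finset.sum_range_sub' (fun x => u x / p) i.val]
    have hu0 : u 0 = 1 := rfl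
    rw [hu0]
    have hKx : (0:ℝ) < (Kn i.val : ℝ) := by exact_mod_cast hK i.val i.isLt
    have : (Kn i.val : ℝ) * (u i.val / ((Kn i.val : ℝ) * p)) = u i.val / p := by
      field_simp
    rw [this]
    apply le_of_eq
    field_simp
    ring
  · -- C3
    intro i
    apply le_of_eq
    simp only [hg]
    ring

lemma uB (ε : ℝ) (hε : 0 < ε) (a : ℕ) (ha : 3 ≤ a) (haε : 2 ≤ ε * a) :
    useq ε (fun x => a - x) a ≤ 0 := by
  have key : ∀ x, x ≤ a → useq ε (fun y => a - y) x * ((a:ℝ) + 1 - x) ≤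
      ((a:ℝ)+1) - ε * x * (2*(a:ℝ)+1-x)/2 := by
    intro x
    induction x with
    | zero => intro _; simp [useq]
    | succ x ih =>
      intro hx1
      have hx : x < a := hx1
      have ihx := ih (le_of_lt hx)
      have hca : ((a - x : ℕ) : ℝ) = (a:ℝ) - x := by
        rw [Nat.cast_sub (le_of_lt hx)]
      have hxa : (x:ℝ) < (a:ℝ) := by exact_mod_cast hx
      have hpos : (0:ℝ) < (a:ℝ) - x := by linarith
      have hrec : useq ε (fun y => a - y) (x+1)
          = useq ε (fun y => a - y) x * (1 + 1/((a:ℝ) - x)) - ε := by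
        show useq ε (fun y => a - y) x * (1 + 1/((a - x : ℕ) : ℝ)) - ε = _
        rw [hca]
      rw [hrec]
      have hcast : ((x+1 : ℕ) : ℝ) = (x:ℝ) + 1 := by push_cast; ring
      rw [hcast]
      have hmul : (useq ε (fun y => a - y) x * (1 + 1/((a:ℝ)-x)) - ε) * ((a:ℝ) + 1 - ((x:ℝ)+1))
          = useq ε (fun y => a - y) x * ((a:ℝ) + 1 - x) - ε * ((a:ℝ)-x)
            - useq ε (fun y => a - y) x * (1 - ((a:ℝ)-x) * (1/((a:ℝ)-x))) := by
        ring
      have hone : ((a:ℝ)-x) * (1/((a:ℝ)-x)) = 1 := by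
        field_simp
      rw [hmul, hone]
      nlinarith [ihx]
  have hfin := key a le_rfl
  have h1 : ((a:ℝ)+1-(a:ℝ)) = 1 := by ring
  rw [h1, mul_one] at hfin
  have haR : (3:ℝ) ≤ (a:ℝ) := by exact_mod_cast ha
  nlinarith [hfin, haε, haR]

lemma sig_main {ι : Type*} [DecidableEq ι] (S : Finset ι)
    (cl : ι → ℝ) (r : ι → ι → ℝ) (p p' : ℝ)
    (hcl : ∀ l, 0 < cl l) (hr : ∀ l' l, 0 ≤ r l' l) (hrll : ∀ l, r l l = 0)
    (hp : 0 < p) (hpp' : p < p')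
    (hSig : ∀ l ∈ S, cl l * ∑ l' ∈ S, r l' l ≤ 1 / p)
    (m : ℕ) (hm : 0 < m) (Kn : ℕ → ℕ) (hK : ∀ x, x < m → 0 < Kn x)
    (hum : useq (p/p') Kn m ≤ 0) :
    ∃ f : ι → Fin (∑ i : Fin m, Kn i.val),
      ∀ i, ∀ l ∈ S.filter (fun l' => f l' = i),
        cl l * ∑ l' ∈ S.filter (fun l'' => f l'' = i), r l' l ≤ 1 / p' := by
  obtain ⟨σ₁, σ₂, hC1, hC2, hC3⟩ := sig_build hp hpp' m Kn hK hum
  set K : Fin m → ℕ := fun i => Kn i.val with hKdef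
  have hKi : ∀ i : Fin m, 0 < K i := fun i => hK i.val i.isLt
  set N := S.card with hN
  set Es : {x // x ∈ S} ≃ Fin N := S.equivFin with hEs
  set e : Fin N → ι := fun k => (Es.symm k).val with he
  have heS : ∀ k, e k ∈ S := fun k => (Es.symm k).prop
  set q : Fin N → Fin N → ℝ := fun j k => cl (e k) * r (e j) (e k) with hqdef
  have hq : ∀ j k, 0 ≤ q j k := fun j k => mul_nonneg (le_of_lt (hcl _)) (hr _ _)
  have hqkk : ∀ k, q k k = 0 := by
    intro k
    simp only [hqdef, hrll, mul_zero]
  have hQ : ∀ k, ∑ j, q j k ≤ 1/p := by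
    intro k
    have hsum : ∑ j, q j k = cl (e k) * ∑ l' ∈ S, r l' (e k) := by
      rw [← mul_sum]
      congr 1
      rw [← Finset.sum_coe_sort S (fun l' => r l' (e k))]
      exact Equiv.sum_comp Es.symm (fun x : {x // x ∈ S} => r x.val (e k))
    rw [hsum]
    exact hSig _ (heS k)
  obtain ⟨F, hF⟩ := sig_core N q hq hqkk (1/p) (1/p') hQ m hm K hKi σ₁ σ₂ hC1 hC2 hC3
  set ψ : (Σ i : Fin m, Fin (K i)) ≃ Fin (∑ i : Fin m, Kn i.val) :=
    Fintype.equivFinOfCardEq (by simp; rfl) with hψ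
  set f : ι → Fin (∑ i : Fin m, Kn i.val) := fun l =>
    if hl : l ∈ S then ψ (F (Es ⟨l, hl⟩)) else ψ ⟨⟨0, hm⟩, ⟨0, hK 0 hm⟩⟩ with hfdef
  refine ⟨f, ?_⟩
  intro i0 l hl
  rw [mem_filter] at hl
  obtain ⟨hlS, hfl⟩ := hl
  set k : Fin N := Es ⟨l, hlS⟩ with hk
  have hek : e k = l := by
    rw [he, hk]
    simp only [Equiv.symm_apply_apply]
  have hfl' : ψ (F k) = i0 := by
    rw [← hfl, hfdef]
    simp only
    rw [dif_pos hlS]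
  have hsum : cl l * ∑ l' ∈ S.filter (fun l'' => f l'' = i0), r l' l
      = ∑ j ∈ univ.filter (fun j => F j = F k), q j k := by
    rw [mul_sum, sum_filter, sum_filter]
    rw [← Finset.sum_coe_sort S (fun l' => if f l' = i0 then cl l * r l' l else 0)]
    rw [← Equiv.sum_comp Es.symm
      (fun x : {x // x ∈ S} => if f x.val = i0 then cl l * r x.val l else 0)]
    apply Fintype.sum_congr
    intro j
    have h1 : f (e j) = ψ (F j) := by
      rw [hfdef]
      simp only
      rw [dif_pos (heS j)]
      congr 2
      have hsub : (⟨e j, heS j⟩ : {x // x ∈ S}) = Es.symm j := Subtype.ext rfl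
      rw [hsub, Equiv.apply_symm_apply]
    have h2 : (ψ (F j) = i0) ↔ (F j = F k) := by
      rw [← hfl']
      exact ⟨fun h => ψ.injective h, fun h => by rw [h]⟩
    have h3 : q j k = cl l * r (e j) l := by
      rw [hqdef]
      simp only
      rw [hek]
    by_cases hc1 : F j = F k
    · rw [if_pos (by rw [h1]; exact h2.mpr hc1), if_pos hc1, h3]
    · rw [if_neg (by rw [h1]; exact fun h => hc1 (h2.mp h)), if_neg hc1]
  rw [hsum]
  exact hF (F k) k rfl

set_option maxHeartbeats 2000000 in
/-- **Signal-strengthening (Halldórsson–Wattenhofer).** In the abstract affectness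
framework, any `p`-signal set `S` can be partitioned into at most `⌈4·(p'/p)²⌉` subsets,
each of which is a `p'`-signal set, for any `p' > p > 0`. -/
theorem stmt_5
    {ι : Type*} [DecidableEq ι] (S : Finset ι)
    (cl : ι → ℝ) (r : ι → ι → ℝ) (p p' : ℝ)
    (hcl : ∀ l, 0 < cl l) (hr : ∀ l' l, 0 ≤ r l' l) (hrll : ∀ l, r l l = 0)
    (hp : 0 < p) (hpp' : p < p')
    -- `S` is a `p`-signal set: the affectness of every link of `S` from `S` is `≤ 1/p`
    (hSig : ∀ l ∈ S, cl l * ∑ l' ∈ S, r l' l ≤ 1 / p) :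
    ∃ (n : ℕ) (f : ι → Fin n),
      n ≤ ⌈4 * (p' / p) ^ 2⌉₊ ∧
      ∀ i : Fin n, ∀ l ∈ S.filter (fun l' => f l' = i),
        cl l * ∑ l' ∈ S.filter (fun l'' => f l'' = i), r l' l ≤ 1 / p' := by
  have hp' : 0 < p' := hp.trans hpp'
  have hpne : p ≠ 0 := ne_of_gt hp
  have hp'ne : p' ≠ 0 := ne_of_gt hp'
  have hε0 : 0 < p/p' := div_pos hp hp'
  have hε1 : p/p' < 1 := (div_lt_one hp').mpr hpp'
  have hceil1 : ∀ nn : ℕ, ((nn:ℝ) < 4*(p'/p)^2) → nn < ⌈4*(p'/p)^2⌉₊ :=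
    fun nn h => Nat.lt_ceil.mpr h
  have hceil2 : ∀ nn : ℕ, ((nn:ℝ) ≤ 4*(p'/p)^2) → nn ≤ ⌈4*(p'/p)^2⌉₊ := by
    intro nn h
    exact_mod_cast h.trans (Nat.le_ceil _)
  have hinv : 4*(p'/p)^2 = 4/(p/p')^2 := by
    field_simp
  by_cases hbig : (4:ℝ)/5 ≤ p/p'
  · -- few classes: K = (3, 2), n = 5
    have hum : useq (p/p') (fun x => 3 - x) 2 ≤ 0 := by
      have h2 : useq (p/p') (fun x => 3 - x) 2
          = (1 * (1 + 1/((3:ℕ):ℝ)) - p/p') * (1 + 1/((2:ℕ):ℝ)) - p/p' := rfl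
      rw [h2]
      push_cast
      linarith
    obtain ⟨f, hf⟩ := sig_main S cl r p p' hcl hr hrll hp hpp' hSig 2 (by norm_num)
      (fun x => 3 - x) (fun x hx => by show 0 < 3 - x; omega) hum
    refine ⟨_, f, ?_, hf⟩
    have hn : (∑ i : Fin 2, ((fun x => 3 - x) (i.val) : ℕ)) = 5 := by decide
    rw [hn]
    have h1 : (1:ℝ) < p'/p := (one_lt_div hp).mpr hpp'
    have h4 : ((4:ℕ):ℝ) < 4*(p'/p)^2 := by push_cast; nlinarith
    have := hceil1 4 h4
    omega
  · push_neg at hbig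
    set a := ⌈2/(p/p')⌉₊ with hadef
    have h2ε : (5:ℝ)/2 < 2/(p/p') := by
      have h := div_lt_div_of_pos_left (by norm_num : (0:ℝ) < 2) hε0 hbig
      calc (5:ℝ)/2 = 2/((4:ℝ)/5) := by norm_num
        _ < 2/(p/p') := h
    have ha3 : 3 ≤ a := by
      have : (2:ℕ) < ⌈2/(p/p')⌉₊ := Nat.lt_ceil.mpr (by push_cast; linarith)
      omega
    have haε : 2 ≤ (p/p') * a := by
      have h := Nat.le_ceil (2/(p/p'))
      rw [← hadef] at h
      calc (2:ℝ) = (p/p') * (2/(p/p')) := by field_simp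
        _ ≤ (p/p') * a := by
            apply mul_le_mul_of_nonneg_left h (le_of_lt hε0)
    have hum := uB (p/p') hε0 a ha3 haε
    obtain ⟨f, hf⟩ := sig_main S cl r p p' hcl hr hrll hp hpp' hSig a (by omega)
      (fun x => a - x) (fun x hx => by show 0 < a - x; omega) hum
    refine ⟨_, f, ?_, hf⟩
    set n := ∑ i : Fin a, ((fun x => a - x) (i.val) : ℕ) with hndef
    have h2n : 2 * n = a * (a+1) := by
      have hs : n = ∑ x ∈ Finset.range a, (a - x) :=
        Fin.sum_univ_eq_sum_range (fun x => a - x) a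
      have hrefl : ∑ x ∈ Finset.range a, (a - x) = ∑ x ∈ Finset.range a, (x+1) := by
        rw [← Finset.sum_range_reflect (fun x => x + 1) a]
        apply sum_congr rfl
        intro x hx
        rw [mem_range] at hx
        omega
      have hplus : ∑ x ∈ Finset.range a, (x+1) = (∑ x ∈ Finset.range a, x) + a := by
        rw [sum_add_distrib, sum_const, card_range]
        simp
      have hg := Finset.sum_range_id_mul_two a
      have ha1 : a * (a-1) + 2*a = a*(a+1) := by
        cases a with
        | zero => simp
        | succ b =>
          simp only [Nat.succ_sub_one]
          ring
      omega
    clear_value n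
    clear_value a
    have hA3 : (3:ℝ) ≤ (a:ℝ) := by exact_mod_cast ha3
    have hε2 : (0:ℝ) < (p/p')^2 := by positivity
    rcases Nat.lt_or_ge a 5 with h5 | h5
    · have hav : a = 3 ∨ a = 4 := by omega
      rcases hav with hav | hav
      · rw [hav] at h2n
        have hn6 : n = 6 := by omega
        rw [hn6]
        have h5lt : ((5:ℕ):ℝ) < 4*(p'/p)^2 := by
          rw [hinv]
          rw [lt_div_iff₀ hε2]
          push_cast
          nlinarith
        have := hceil1 5 h5lt
        omega
      · rw [hav] at h2n
        have hn10 : n = 10 := by omega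
        rw [hn10]
        have h3e : ((3:ℕ):ℝ) < 2/(p/p') := by
          apply Nat.lt_ceil.mp
          rw [← hadef]
          omega
        have h9lt : ((9:ℕ):ℝ) < 4*(p'/p)^2 := by
          rw [hinv]
          rw [lt_div_iff₀ hε2]
          push_cast
          push_cast at h3e
          have := (lt_div_iff₀ hε0).mp h3e
          nlinarith
        have := hceil1 9 h9lt
        omega
    · -- a ≥ 5
      have haR : ((a:ℝ) - 1) < 2/(p/p') := by
        have hlt : a - 1 < ⌈2/(p/p')⌉₊ := by omega
        have := Nat.lt_ceil.mp hlt
        have hc : (((a-1:ℕ)):ℝ) = (a:ℝ) - 1 := by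
          push_cast [Nat.cast_sub (by omega : 1 ≤ a)]
          ring
        rwa [hc] at this
      have hA5 : (5:ℝ) ≤ (a:ℝ) := by exact_mod_cast h5
      have h2nR : 2*(n:ℝ) = (a:ℝ)*((a:ℝ)+1) := by exact_mod_cast h2n
      have hstep : (p/p') * ((a:ℝ)-1) < 2 := by
        have := (lt_div_iff₀ hε0).mp haR
        linarith
      have hA1 : (0:ℝ) ≤ (a:ℝ) - 1 := by linarith
      have hAA : (a:ℝ)*((a:ℝ)+1) ≤ 2*((a:ℝ)-1)^2 := by nlinarith
      have hsq : (((a:ℝ)-1)*(p/p'))^2 ≤ 4 := by nlinarith [mul_nonneg hA1 (le_of_lt hε0)]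
      have hfin : (n:ℝ)*(p/p')^2 ≤ 4 := by
        have e0 : (n:ℝ) ≤ ((a:ℝ)-1)^2 := by nlinarith [h2nR, hAA]
        have e1 : (n:ℝ)*(p/p')^2 ≤ ((a:ℝ)-1)^2*(p/p')^2 :=
          mul_le_mul_of_nonneg_right e0 (sq_nonneg _)
        have e2 : ((a:ℝ)-1)^2*(p/p')^2 = (((a:ℝ)-1)*(p/p'))^2 := by ring
        linarith [hsq]
      apply hceil2
      rw [hinv, le_div_iff₀ hε2]
      exact hfin
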